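/- arXiv:1601.06729 — 2 statements merged into one kernel-verified Lean document; each statement's English description precedes it below -/
import Mathlib

section
/- Let J ∈ ℂ^{2N×2N} be an invertible skew-symmetric matrix (Jᵀ = −J), and let W, W̃ ∈ ℂ^{2N×2N} both be J-symplectic (WᵀJW = J and W̃ᵀJW̃ = J). If rank(W̃ − W) = 1, then there exists a vector u ∈ ℂ^{2N} such that W̃ = (I + uuᵀJ)W, where uᵀ denotes the (non-conjugated) transpose. -/
open Matrix Module

lemma rank_one_decomp {m n : Type*} [Fintype m] [Fintype n] [DecidableEq n]
    (A : Matrix m n ℂ) (h : A.rank = 1) :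
    ∃ v : m → ℂ, ∃ w : n → ℂ, v ≠ 0 ∧ A = vecMulVec v w := by
  have h' : finrank ℂ (LinearMap.range A.mulVecLin) = 1 := h
  rw [finrank_eq_one_iff'] at h'
  obtain ⟨v₀, hv₀, hall⟩ := h'
  have hcol : ∀ j, Aᵀ j ∈ LinearMap.range A.mulVecLin := fun j =>
    ⟨Pi.single j 1, by simp [mulVecLin]; rfl⟩
  refine ⟨(v₀ : m → ℂ), fun j => Classical.choose (hall ⟨Aᵀ j, hcol j⟩), ?_, ?_⟩
  · intro hz
    exact hv₀ (Subtype.ext hz)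
  · ext i j
    have h1 := Classical.choose_spec (hall ⟨Aᵀ j, hcol j⟩)
    have h2 := congrArg (fun x : LinearMap.range A.mulVecLin => (x : m → ℂ) i) h1
    simp only [Submodule.coe_smul, Pi.smul_apply, smul_eq_mul] at h2
    rw [vecMulVec_apply, mul_comm, h2]
    rfl

lemma vmv_mul {n : Type*} [Fintype n] (x y : n → ℂ) (M : Matrix n n ℂ) :
    vecMulVec x y * M = vecMulVec x (y ᵥ* M) := by
  ext i j
  simp only [mul_apply, vecMulVec_apply, vecMul, dotProduct, Finset.mul_sum]
  exact Finset.sum_congr rfl fun k _ => by ring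

lemma mul_vmv {n : Type*} [Fintype n] (M : Matrix n n ℂ) (x y : n → ℂ) :
    M * vecMulVec x y = vecMulVec (M *ᵥ x) y := by
  ext i j
  simp only [mul_apply, vecMulVec_apply, mulVec, dotProduct, Finset.sum_mul]
  exact Finset.sum_congr rfl fun k _ => by ring

lemma vecMul_vmv {n : Type*} [Fintype n] (x a b : n → ℂ) :
    x ᵥ* vecMulVec a b = (x ⬝ᵥ a) • b := by
  ext j
  simp only [vecMul, vecMulVec_apply, dotProduct, Pi.smul_apply, smul_eq_mul,
    Finset.sum_mul]
  exact Finset.sum_congr rfl fun k _ => by ring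

lemma vmv_transpose {n : Type*} (x y : n → ℂ) :
    (vecMulVec x y)ᵀ = vecMulVec y x := by
  ext i j; simp [vecMulVec_apply, transpose_apply, mul_comm]

/-- **Lemma, after Mehl et al..** Let `J ∈ ℂ^{2N×2N}` be invertible and
skew-symmetric, and let `W, W'` both be `J`-symplectic (with respect to the non-conjugated
transpose).  If `rank(W' − W) = 1`, then `W' = (I + uuᵀJ)W` for some vector `u ∈ ℂ^{2N}`. -/
theorem rankOne_difference_of_symplectic (N : ℕ) (hN : 0 < N)
    (J W W' : Matrix (Fin (2 * N)) (Fin (2 * N)) ℂ)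
    (hJinv : IsUnit J) (hJskew : Jᵀ = -J)
    (hW : Wᵀ * J * W = J) (hW' : W'ᵀ * J * W' = J)
    (hrank : (W' - W).rank = 1) :
    ∃ u : Fin (2 * N) → ℂ, W' = (1 + vecMulVec u u * J) * W := by
  have hJd : IsUnit J.det := (isUnit_iff_isUnit_det J).mp hJinv
  -- W is invertible
  have hWd : IsUnit W.det := by
    have hdet : W.det * W.det * J.det = J.det := by
      have := congrArg Matrix.det hW
      simpa [det_mul, det_transpose, mul_comm, mul_assoc, mul_left_comm] using this
    have h2 : W.det * W.det = 1 := by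
      have hne : J.det ≠ 0 := hJd.ne_zero
      have := mul_right_cancel₀ hne (hdet.trans (one_mul J.det).symm)
      exact this
    exact IsUnit.of_mul_eq_one _ h2
  have hWtd : IsUnit Wᵀ.det := by rwa [det_transpose]
  have hWinvd : IsUnit W⁻¹.det := W.isUnit_nonsing_inv_det hWd
  set K := (W' - W) * W⁻¹ with hKdef
  have hKrank : K.rank = 1 := by
    rw [hKdef, rank_mul_eq_left_of_isUnit_det _ _ hWinvd]; exact hrank
  obtain ⟨v, w, hv, hK⟩ := rank_one_decomp K hKrank
  have hW'eq : W' = (1 + K) * W := by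
    rw [add_mul, one_mul, hKdef, nonsing_inv_mul_cancel_right _ _ hWd]
    abel
  -- cancel W to get the symplectic relation for 1 + K
  have e1 : ∀ X : Matrix (Fin (2 * N)) (Fin (2 * N)) ℂ,
      (Wᵀ)⁻¹ * (Wᵀ * X * W) * W⁻¹ = X := by
    intro X
    rw [Matrix.mul_assoc Wᵀ X W, nonsing_inv_mul_cancel_left _ _ hWtd,
      mul_nonsing_inv_cancel_right _ _ hWd]
  have hE : (1 + K)ᵀ * J * (1 + K) = J := by
    have h1 : Wᵀ * ((1 + K)ᵀ * J * (1 + K)) * W = Wᵀ * J * W := by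
      rw [hW]
      rw [hW'eq, transpose_mul] at hW'
      calc Wᵀ * ((1 + K)ᵀ * J * (1 + K)) * W
          = Wᵀ * (1 + K)ᵀ * J * ((1 + K) * W) := by noncomm_ring
        _ = J := hW'
    have h2 := congrArg (fun M => (Wᵀ)⁻¹ * M * W⁻¹) h1
    simpa only [e1] using h2
  have hKey : Kᵀ * J + J * K + Kᵀ * J * K = 0 := by
    have : Kᵀ * J + J * K + Kᵀ * J * K = (1 + K)ᵀ * J * (1 + K) - J := by
      simp only [transpose_add, transpose_one]
      noncomm_ring
    rw [this, hE, sub_self]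
  -- dot product vanishing
  have ha : v ᵥ* J = -(J *ᵥ v) := by
    have := vecMul_transpose Jᵀ v
    rwa [transpose_transpose, hJskew, neg_mulVec] at this
  have hs : (v ᵥ* J) ⬝ᵥ v = 0 := by
    have h2 : (v ᵥ* J) ⬝ᵥ v = v ⬝ᵥ (J *ᵥ v) := (dotProduct_mulVec v J v).symm
    have h3 : (v ᵥ* J) ⬝ᵥ v = -(v ⬝ᵥ (J *ᵥ v)) := by
      rw [ha, neg_dotProduct, dotProduct_comm]
    have h4 : v ⬝ᵥ (J *ᵥ v) = 0 := by
      have h5 := h2.symm.trans h3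
      linear_combination h5 / 2
    rw [h2, h4]
  have hKey2 : vecMulVec w (v ᵥ* J) + vecMulVec (J *ᵥ v) w = 0 := by
    have := hKey
    rw [hK, vmv_transpose, vmv_mul, mul_vmv, vmv_mul, vecMul_vmv, hs, zero_smul] at this
    have hz : vecMulVec w (0 : Fin (2 * N) → ℂ) = 0 := by
      ext i j; simp [vecMulVec_apply]
    rwa [hz, add_zero] at this
  have hprop : ∀ i j, (J *ᵥ v) i * w j = w i * (J *ᵥ v) j := by
    intro i j
    have h := congrFun (congrFun hKey2 i) j
    simp only [Matrix.add_apply, vecMulVec_apply, Matrix.zero_apply, Pi.add_apply] at h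
    have haj : (v ᵥ* J) j = -((J *ᵥ v) j) := by rw [ha]; rfl
    rw [haj] at h
    linear_combination h
  have hb : (J *ᵥ v) ≠ 0 := by
    intro h0
    apply hv
    have := congrArg (fun x => J⁻¹ *ᵥ x) h0
    simpa [mulVec_mulVec, nonsing_inv_mul _ hJd] using this
  obtain ⟨j₀, hj₀⟩ := Function.ne_iff.mp hb
  simp only [Pi.zero_apply] at hj₀
  set lam : ℂ := w j₀ / (J *ᵥ v) j₀ with hlam
  have hw : ∀ i, w i = lam * (J *ᵥ v) i := by
    intro i
    have h := hprop i j₀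
    rw [hlam, div_mul_eq_mul_div, eq_div_iff hj₀]
    linear_combination -h
  obtain ⟨μ, hμ⟩ := IsAlgClosed.exists_pow_nat_eq (k := ℂ) (-lam) (n := 2) (by norm_num)
  refine ⟨μ • v, ?_⟩
  have huK : vecMulVec (μ • v) (μ • v) * J = K := by
    rw [vmv_mul, hK]
    ext i j
    simp only [vecMulVec_apply, smul_vecMul, Pi.smul_apply, smul_eq_mul]
    have haj : (v ᵥ* J) j = -((J *ᵥ v) j) := by rw [ha]; rfl
    rw [hw j]
    linear_combination (v i * (v ᵥ* J) j) * hμ - (lam * v i) * haj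
  rw [huK]
  exact hW'eq
end

section
/- Let J ∈ ℝ^{2N×2N} be an invertible skew-symmetric matrix, let H : ℝ → ℝ^{2N×2N} be a function with H(t)ᵀ = H(t) for all t, and let X : ℝ → ℝ^{2N×2N} be differentiable and satisfy J·X′(t) = H(t)·X(t) for all t. Fix u ∈ ℝ^{2N} and define E(t) = (JuuᵀH(t))ᵀ + JuuᵀH(t) + (uuᵀJ)ᵀH(t)(uuᵀJ). Then X̃(t) = (I + uuᵀJ)·X(t) is differentiable and satisfies J·X̃′(t) = (H(t) + E(t))·X̃(t) for all t. -/
open Matrix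

/-- The perturbation matrix `E = (JuuᵀH)ᵀ + JuuᵀH + (uuᵀJ)ᵀH(uuᵀJ)` associated with a
coefficient matrix `H`, a skew-symmetric matrix `J` and a vector `u`. -/
def pertMatrix {n : ℕ} (J : Matrix (Fin n) (Fin n) ℝ) (u : Fin n → ℝ)
    (H : Matrix (Fin n) (Fin n) ℝ) : Matrix (Fin n) (Fin n) ℝ :=
  (J * vecMulVec u u * H)ᵀ + J * vecMulVec u u * H +
    (vecMulVec u u * J)ᵀ * H * (vecMulVec u u * J)

/-- **Proposition 3.** If `X` is a differentiable solution of the Hamiltonian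
system `J·X′(t) = H(t)·X(t)` (with `J` invertible skew-symmetric and `H(t)` symmetric), then
for every `u ∈ ℝ^{2N}` the rank one perturbation `X̃(t) = (I + uuᵀJ)·X(t)` is differentiable
and solves the perturbed system `J·X̃′(t) = (H(t) + E(t))·X̃(t)`, where
`E(t) = (JuuᵀH(t))ᵀ + JuuᵀH(t) + (uuᵀJ)ᵀH(t)(uuᵀJ)`.  Differentiability is expressed
entrywise. -/
theorem rankOnePerturbation_solves_perturbed_system (N : ℕ) (hN : 0 < N)
    (J : Matrix (Fin (2 * N)) (Fin (2 * N)) ℝ)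
    (hJinv : IsUnit J) (hJskew : Jᵀ = -J)
    (H X X' : ℝ → Matrix (Fin (2 * N)) (Fin (2 * N)) ℝ)
    (hH : ∀ t, (H t)ᵀ = H t)
    (hX : ∀ t i j, HasDerivAt (fun s => X s i j) (X' t i j) t)
    (hsys : ∀ t, J * X' t = H t * X t)
    (u : Fin (2 * N) → ℝ) :
    ∀ t : ℝ, ∃ Y : Matrix (Fin (2 * N)) (Fin (2 * N)) ℝ,
      (∀ i j, HasDerivAt (fun s => ((1 + vecMulVec u u * J) * X s) i j) (Y i j) t) ∧
      J * Y = (H t + pertMatrix J u (H t)) * ((1 + vecMulVec u u * J) * X t) := by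
  intro t
  set V := vecMulVec u u with hV
  have hVt : Vᵀ = V := by
    ext i j; simp [hV, vecMulVec_apply, mul_comm]
  have hkey : V * J * V = 0 := by
    have hc : u ⬝ᵥ J *ᵥ u = 0 := by
      have h1 : u ⬝ᵥ J *ᵥ u = Jᵀ *ᵥ u ⬝ᵥ u := by rw [dotProduct_mulVec, mulVec_transpose]
      rw [hJskew, neg_mulVec] at h1
      simp [dotProduct_comm (-(J *ᵥ u)) u] at h1
      linarith
    ext i j
    simp only [hV, mul_apply, vecMulVec_apply, Matrix.zero_apply]
    have : ∑ k, (∑ l, u i * u l * J l k) * (u k * u j)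
        = u i * u j * (u ⬝ᵥ J *ᵥ u) := by
      simp only [dotProduct, mulVec, Finset.mul_sum, Finset.sum_mul]
      rw [Finset.sum_comm]
      apply Finset.sum_congr rfl; intro k _
      apply Finset.sum_congr rfl; intro l _
      ring
    rw [this, hc, mul_zero]
  refine ⟨(1 + V * J) * X' t, fun i j => ?_, ?_⟩
  · simp only [mul_apply]
    exact HasDerivAt.fun_sum fun k _ => (hX t k j).const_mul _
  · have hmain : (H t + pertMatrix J u (H t)) * (1 + V * J)
        = H t + J * V * H t - H t * ((V * J * V) * J) - J * V * H t * ((V * J * V) * J) := by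
      unfold pertMatrix
      rw [← hV]
      simp only [transpose_mul, hH, hJskew, hVt]
      noncomm_ring
    rw [hkey] at hmain
    simp only [Matrix.zero_mul, Matrix.mul_zero, sub_zero] at hmain
    have h2 : J * ((1 + V * J) * X' t) = J * X' t + J * V * (J * X' t) := by
      noncomm_ring
    rw [h2, hsys t, ← Matrix.mul_assoc (H t + pertMatrix J u (H t)), hmain]
    noncomm_ring
end
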